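/- arXiv:2405.05160 — 3 statements merged into one kernel-verified Lean document; each statement's English description precedes it below -/
import Mathlib

section
/- For strictly decreasing logits z₁ > z₂ > ⋯ > z_K, the log of the maximum softmax response satisfies log SR_max(λz) = −log ∑ⱼ exp(λ(zⱼ − z₁)), and as λ → ∞ this is asymptotically equivalent to −exp(λ(z₂ − z₁)), i.e., the ratio log SR_max(λz) / (−exp(λ(z₂ − z₁))) tends to 1. -/
/-- For strictly decreasing logits, `log SR_max(λz) = -log ∑ⱼ exp (λ (zⱼ - z₀))`,
and `log SR_max(λz) ∼ -exp (λ (z₁ - z₀))` as `λ → ∞`. -/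
theorem log_srmax_asymptotic {K : ℕ} (z : Fin (K + 2) → ℝ) (hz : StrictAnti z) :
    (∀ lam : ℝ,
      Real.log (Real.exp (lam * z 0) / ∑ j, Real.exp (lam * z j))
        = -Real.log (∑ j, Real.exp (lam * (z j - z 0)))) ∧
    Filter.Tendsto (fun lam : ℝ =>
        Real.log (Real.exp (lam * z 0) / ∑ j, Real.exp (lam * z j))
          / (-Real.exp (lam * (z 1 - z 0))))
      Filter.atTop (nhds 1) := by
  open Real Filter Finset in
  set S : ℝ → ℝ := fun lam => ∑ j, Real.exp (lam * (z j - z 0)) with hSdef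
  have hTpos : ∀ lam : ℝ, 0 < ∑ j, Real.exp (lam * z j) := fun lam =>
    Finset.sum_pos (fun j _ => Real.exp_pos _) ⟨0, Finset.mem_univ 0⟩
  have hSeq : ∀ lam : ℝ, S lam = (∑ j, Real.exp (lam * z j)) / Real.exp (lam * z 0) := by
    intro lam
    rw [hSdef, Finset.sum_div]
    exact Finset.sum_congr rfl fun j _ => by rw [← Real.exp_sub, mul_sub]
  have key : ∀ lam : ℝ,
      Real.log (Real.exp (lam * z 0) / ∑ j, Real.exp (lam * z j))
        = -Real.log (S lam) := by
    intro lam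
    rw [hSeq, Real.log_div (Real.exp_ne_zero _) (ne_of_gt (hTpos lam)),
        Real.log_div (ne_of_gt (hTpos lam)) (Real.exp_ne_zero _), Real.log_exp]
    ring
  refine ⟨key, ?_⟩
  -- helper: exp (lam * c) → 0 for c < 0
  have hexp0 : ∀ c : ℝ, c < 0 → Tendsto (fun lam : ℝ => Real.exp (lam * c)) atTop (nhds 0) :=
    fun c hc => Real.tendsto_exp_atBot.comp (Tendsto.atTop_mul_const_of_neg hc tendsto_id)
  -- rewrite S as 1 + tail
  have hS1 : ∀ lam : ℝ, S lam = 1 + ∑ j : Fin (K + 1), Real.exp (lam * (z j.succ - z 0)) := by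
    intro lam
    rw [hSdef]
    simp [Fin.sum_univ_succ]
  have hRlim : Tendsto (fun lam : ℝ => ∑ j : Fin (K + 1), Real.exp (lam * (z j.succ - z 0)))
      atTop (nhds 0) := by
    have := tendsto_finset_sum (Finset.univ : Finset (Fin (K + 1)))
      (fun j _ => hexp0 (z j.succ - z 0) (sub_neg.mpr (hz (Fin.succ_pos j))))
    simpa using this
  have hS : Tendsto S atTop (nhds 1) := by
    have : Tendsto (fun lam : ℝ => 1 + ∑ j : Fin (K + 1), Real.exp (lam * (z j.succ - z 0)))
        atTop (nhds (1 + 0)) := tendsto_const_nhds.add hRlim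
    simpa using this.congr fun lam => (hS1 lam).symm
  have hSgt1 : ∀ lam : ℝ, 1 < S lam := by
    intro lam
    rw [hS1]
    have : 0 < ∑ j : Fin (K + 1), Real.exp (lam * (z j.succ - z 0)) :=
      Finset.sum_pos (fun j _ => Real.exp_pos _) ⟨0, Finset.mem_univ 0⟩
    linarith
  have hSne : Tendsto S atTop (nhdsWithin 1 {(1:ℝ)}ᶜ) := by
    rw [tendsto_nhdsWithin_iff]
    exact ⟨hS, Filter.Eventually.of_forall fun lam => ne_of_gt (hSgt1 lam)⟩
  -- factor 1 : log (S lam) / (S lam - 1) → 1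
  have hderiv : HasDerivAt Real.log 1 1 := by simpa using Real.hasDerivAt_log one_ne_zero
  have hfac1 : Tendsto (fun lam : ℝ => Real.log (S lam) / (S lam - 1)) atTop (nhds 1) := by
    have hslope := (hasDerivAt_iff_tendsto_slope.mp hderiv).comp hSne
    refine hslope.congr fun lam => ?_
    simp [slope_def_field, Real.log_one]
  -- factor 2 : (S lam - 1) / exp (lam * (z 1 - z 0)) → 1
  have hfac2eq : ∀ lam : ℝ, (S lam - 1) / Real.exp (lam * (z 1 - z 0))
      = 1 + ∑ j : Fin K, Real.exp (lam * (z j.succ.succ - z 1)) := by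
    intro lam
    rw [hS1, add_sub_cancel_left, Finset.sum_div]
    rw [Fin.sum_univ_succ (fun j : Fin (K + 1) => Real.exp (lam * (z j.succ - z 0)) / Real.exp (lam * (z 1 - z 0)))]
    congr 1
    · rw [Fin.succ_zero_eq_one, div_self (Real.exp_ne_zero _)]
    · exact Finset.sum_congr rfl fun j _ => by rw [← Real.exp_sub]; ring_nf
  have hfac2 : Tendsto (fun lam : ℝ => (S lam - 1) / Real.exp (lam * (z 1 - z 0)))
      atTop (nhds 1) := by
    have htail : Tendsto (fun lam : ℝ => ∑ j : Fin K, Real.exp (lam * (z j.succ.succ - z 1)))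
        atTop (nhds 0) := by
      have := tendsto_finset_sum (Finset.univ : Finset (Fin K))
        (fun j _ => hexp0 (z j.succ.succ - z 1)
          (sub_neg.mpr (hz (by simp [Fin.lt_def, Fin.val_one]))))
      simpa using this
    have : Tendsto (fun lam : ℝ => 1 + ∑ j : Fin K, Real.exp (lam * (z j.succ.succ - z 1)))
        atTop (nhds (1 + 0)) := tendsto_const_nhds.add htail
    simpa using this.congr fun lam => (hfac2eq lam).symm
  have := hfac1.mul hfac2
  rw [mul_one] at this
  refine this.congr fun lam => ?_
  have h1 : S lam - 1 ≠ 0 := sub_ne_zero.mpr (ne_of_gt (hSgt1 lam))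
  rw [key lam, neg_div_neg_eq, div_mul_div_comm, mul_comm (S lam - 1),
    mul_div_mul_right _ _ h1]
end

section
/- For strictly decreasing logits z₁ > z₂ > ⋯ > z_K, log ‖σ(λz)‖₂² is asymptotically equivalent to −2·exp(λ(z₂ − z₁)) as λ → ∞, i.e., their ratio tends to 1. -/
open Filter Real Finset

/-- For strictly decreasing logits, `log ‖σ(λz)‖₂² ∼ -2 exp (λ (z₁ - z₀))` as `λ → ∞`. -/
theorem log_sq_norm_softmax_asymptotic {K : ℕ} (z : Fin (K + 2) → ℝ) (hz : StrictAnti z) :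
    Filter.Tendsto (fun lam : ℝ =>
        Real.log (∑ i, (Real.exp (lam * z i) / ∑ j, Real.exp (lam * z j)) ^ 2)
          / (-2 * Real.exp (lam * (z 1 - z 0))))
      Filter.atTop (nhds 1) := by
  have h01 : z 1 < z 0 := hz (by simp [Fin.lt_def])
  have hz1 : ∀ i : Fin (K + 2), i ≠ 0 → z i ≤ z 1 := by
    intro i hi
    rcases eq_or_ne i 1 with rfl | hi1
    · exact le_rfl
    · refine (hz ?_).le
      rw [Fin.lt_def]
      have h0 : (i : ℕ) ≠ 0 := fun h => hi (Fin.ext (by simpa using h))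
      have h1 : (i : ℕ) ≠ 1 := fun h => hi1 (Fin.ext (by simpa using h))
      simp only [Fin.val_one]
      omega
  have hzlt : ∀ i : Fin (K + 2), i ≠ 0 → z i - z 0 < 0 := by
    intro i hi
    have : z i ≤ z 1 := hz1 i hi
    linarith
  set ε : ℝ → ℝ := fun lam => Real.exp (lam * (z 1 - z 0)) with hεdef
  set u : ℝ → ℝ := fun lam => ∑ i ∈ Finset.univ.erase 0, Real.exp (lam * (z i - z 0)) with hudef
  set v : ℝ → ℝ := fun lam => ∑ i ∈ Finset.univ.erase 0, Real.exp (lam * (z i - z 0)) ^ 2 with hvdef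
  have hεpos : ∀ lam, 0 < ε lam := fun lam => Real.exp_pos _
  have hne0 : (1 : Fin (K + 2)) ∈ Finset.univ.erase (0 : Fin (K + 2)) := by
    simp [Fin.ext_iff]
  have hupos : ∀ lam, 0 < u lam := fun lam =>
    Finset.sum_pos (fun i _ => Real.exp_pos _) ⟨1, hne0⟩
  have hvnonneg : ∀ lam, 0 ≤ v lam :=
    fun lam => Finset.sum_nonneg fun i _ => sq_nonneg _
  -- key identity
  have hkey : ∀ lam : ℝ,
      Real.log (∑ i, (Real.exp (lam * z i) / ∑ j, Real.exp (lam * z j)) ^ 2)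
        = Real.log (1 + v lam) - 2 * Real.log (1 + u lam) := by
    intro lam
    have h1u : (0 : ℝ) < 1 + u lam := by have := hupos lam; linarith
    have h1v : (0 : ℝ) < 1 + v lam := by have := hvnonneg lam; linarith
    have hS : (∑ j, Real.exp (lam * z j)) = Real.exp (lam * z 0) * (1 + u lam) := by
      rw [mul_add, mul_one, hudef, Finset.mul_sum,
        ← Finset.add_sum_erase _ _ (Finset.mem_univ (0 : Fin (K + 2)))]
      congr 1
      refine Finset.sum_congr rfl fun i _ => ?_
      rw [← Real.exp_add]
      ring_nf
    have hsum : (∑ i, (Real.exp (lam * z i) / ∑ j, Real.exp (lam * z j)) ^ 2)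
        = (1 + v lam) / (1 + u lam) ^ 2 := by
      rw [hS]
      have : ∀ i : Fin (K + 2),
          (Real.exp (lam * z i) / (Real.exp (lam * z 0) * (1 + u lam))) ^ 2
            = Real.exp (lam * (z i - z 0)) ^ 2 / (1 + u lam) ^ 2 := by
        intro i
        have hexp : Real.exp (lam * (z i - z 0)) * Real.exp (lam * z 0)
            = Real.exp (lam * z i) := by
          rw [← Real.exp_add]; ring_nf
        rw [div_pow, mul_pow]
        rw [div_eq_div_iff (by positivity) (by positivity), ← hexp]
        ring
      calc (∑ i, (Real.exp (lam * z i) / (Real.exp (lam * z 0) * (1 + u lam))) ^ 2)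
          = ∑ i, Real.exp (lam * (z i - z 0)) ^ 2 / (1 + u lam) ^ 2 :=
            Finset.sum_congr rfl fun i _ => this i
        _ = (∑ i, Real.exp (lam * (z i - z 0)) ^ 2) / (1 + u lam) ^ 2 := by
            rw [Finset.sum_div]
        _ = (1 + v lam) / (1 + u lam) ^ 2 := by
            congr 1
            rw [← Finset.add_sum_erase _ _ (Finset.mem_univ (0 : Fin (K + 2)))]
            simp [hvdef]
    rw [hsum, Real.log_div h1v.ne' (by positivity), Real.log_pow]
    push_cast
    ring
  -- limits
  have hεlim : Tendsto ε atTop (nhds 0) := by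
    refine Real.tendsto_exp_atBot.comp ?_
    exact Tendsto.atTop_mul_const_of_neg (by linarith) tendsto_id
  have hulim : Tendsto u atTop (nhds 0) := by
    rw [hudef]
    have h0 : (0 : ℝ) = ∑ i ∈ Finset.univ.erase (0 : Fin (K + 2)), (0 : ℝ) := by simp
    rw [h0]
    refine tendsto_finset_sum _ fun i hi => ?_
    refine Real.tendsto_exp_atBot.comp ?_
    exact Tendsto.atTop_mul_const_of_neg (hzlt i (Finset.ne_of_mem_erase hi)) tendsto_id
  -- T2 : log(1+u)/u → 1
  have hT2 : Tendsto (fun lam => Real.log (1 + u lam) / u lam) atTop (nhds 1) := by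
    have hslope : Tendsto (slope Real.log 1) (nhdsWithin 1 {(1 : ℝ)}ᶜ) (nhds 1) := by
      have := (hasDerivAt_iff_tendsto_slope).mp (Real.hasDerivAt_log one_ne_zero)
      simpa using this
    have hcomp : Tendsto (fun lam => (1 : ℝ) + u lam) atTop (nhdsWithin 1 {(1 : ℝ)}ᶜ) := by
      rw [tendsto_nhdsWithin_iff]
      constructor
      · have : Tendsto (fun lam => (1 : ℝ) + u lam) atTop (nhds (1 + 0)) :=
          (tendsto_const_nhds).add hulim
        simpa using this
      · exact Eventually.of_forall fun lam => by
          have := hupos lam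
          simp only [Set.mem_compl_iff, Set.mem_singleton_iff]
          intro h
          nlinarith
    have := hslope.comp hcomp
    refine this.congr fun lam => ?_
    simp [slope_def_field, Real.log_one]
  -- T3 : u/ε → 1
  have hT3 : Tendsto (fun lam => u lam / ε lam) atTop (nhds 1) := by
    have heq : ∀ lam, u lam / ε lam
        = 1 + ∑ i ∈ (Finset.univ.erase (0 : Fin (K + 2))).erase 1,
            Real.exp (lam * (z i - z 1)) := by
      intro lam
      simp only [hudef, hεdef]
      rw [Finset.sum_div]
      rw [← Finset.add_sum_erase _ _ hne0]
      congr 1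
      · exact div_self (Real.exp_pos _).ne'
      · refine Finset.sum_congr rfl fun i _ => ?_
        rw [← Real.exp_sub]
        congr 1
        ring
    have hlim : Tendsto (fun lam => 1 + ∑ i ∈ (Finset.univ.erase (0 : Fin (K + 2))).erase 1,
        Real.exp (lam * (z i - z 1))) atTop (nhds (1 + 0)) := by
      refine tendsto_const_nhds.add ?_
      have h0 : (0 : ℝ) = ∑ i ∈ (Finset.univ.erase (0 : Fin (K + 2))).erase 1, (0 : ℝ) := by simp
      rw [h0]
      refine tendsto_finset_sum _ fun i hi => ?_
      have hi1 : i ≠ 1 := Finset.ne_of_mem_erase hi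
      have hi0 : i ≠ 0 := Finset.ne_of_mem_erase (Finset.mem_of_mem_erase hi)
      have hlt : z i - z 1 < 0 := by
        have : z i < z 1 := by
          refine hz ?_
          rw [Fin.lt_def]
          have h0 : (i : ℕ) ≠ 0 := fun h => hi0 (Fin.ext (by simpa using h))
          have h1 : (i : ℕ) ≠ 1 := fun h => hi1 (Fin.ext (by simpa using h))
          simp only [Fin.val_one]
          omega
        linarith
      exact Real.tendsto_exp_atBot.comp
        (Tendsto.atTop_mul_const_of_neg hlt tendsto_id)
    have := hlim.congr' (Eventually.of_forall fun lam => (heq lam).symm)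
    simpa using this
  -- T1 : log(1+v)/(-2ε) → 0
  have hT1 : Tendsto (fun lam => Real.log (1 + v lam) / (-2 * ε lam)) atTop (nhds 0) := by
    refine squeeze_zero_norm' ?_ (by simpa using hεlim.const_mul ((K + 2 : ℝ) / 2))
    filter_upwards [eventually_ge_atTop (0 : ℝ)] with lam hlam
    have h1v : (0 : ℝ) < 1 + v lam := by have := hvnonneg lam; linarith
    have hlog : Real.log (1 + v lam) ≤ v lam := by
      have := Real.log_le_sub_one_of_pos h1v
      linarith
    have hlognn : 0 ≤ Real.log (1 + v lam) := by
      have : (1 : ℝ) ≤ 1 + v lam := by have := hvnonneg lam; linarith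
      exact Real.log_nonneg this
    have hvle : v lam ≤ (K + 2 : ℝ) * ε lam ^ 2 := by
      rw [hvdef]
      calc ∑ i ∈ Finset.univ.erase (0 : Fin (K + 2)), Real.exp (lam * (z i - z 0)) ^ 2
          ≤ (Finset.univ.erase (0 : Fin (K + 2))).card • (ε lam ^ 2) := by
            refine Finset.sum_le_card_nsmul _ _ _ fun i hi => ?_
            have : Real.exp (lam * (z i - z 0)) ≤ ε lam := by
              apply Real.exp_le_exp.mpr
              have := hz1 i (Finset.ne_of_mem_erase hi)
              nlinarith
            exact pow_le_pow_left₀ (Real.exp_pos _).le this 2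
        _ ≤ (K + 2 : ℝ) * ε lam ^ 2 := by
            rw [nsmul_eq_mul]
            have : ((Finset.univ.erase (0 : Fin (K + 2))).card : ℝ) ≤ (K + 2 : ℝ) := by
              have := Finset.card_erase_le (s := (Finset.univ : Finset (Fin (K + 2)))) (a := (0 : Fin (K+2)))
              have hcard : (Finset.univ : Finset (Fin (K + 2))).card = K + 2 := by simp
              calc ((Finset.univ.erase (0 : Fin (K + 2))).card : ℝ)
                  ≤ ((Finset.univ : Finset (Fin (K + 2))).card : ℝ) := by exact_mod_cast this
                _ = (K + 2 : ℝ) := by rw [hcard]; push_cast; ring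
            nlinarith [sq_nonneg (ε lam)]
    rw [Real.norm_eq_abs, abs_div]
    rw [abs_of_nonneg hlognn, abs_of_neg (by nlinarith [hεpos lam] : -2 * ε lam < 0)]
    have h2ε : (0 : ℝ) < 2 * ε lam := by nlinarith [hεpos lam]
    rw [div_le_iff₀ (by linarith)]
    have : -(-2 * ε lam) = 2 * ε lam := by ring
    rw [this]
    calc Real.log (1 + v lam) ≤ v lam := hlog
      _ ≤ (K + 2 : ℝ) * ε lam ^ 2 := hvle
      _ = (K + 2 : ℝ) / 2 * ε lam * (2 * ε lam) := by ring
  -- combine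
  have hcomb : Tendsto (fun lam => Real.log (1 + v lam) / (-2 * ε lam)
      + (Real.log (1 + u lam) / u lam) * (u lam / ε lam)) atTop (nhds (0 + 1 * 1)) :=
    hT1.add (hT2.mul hT3)
  norm_num at hcomb
  refine hcomb.congr fun lam => ?_
  have hu := (hupos lam).ne'
  have hε := (hεpos lam).ne'
  rw [hkey lam]
  field_simp
  ring
end

section
/- For two scalar logit gaps: if the top-two softmax probabilities dominate, the asymptotic orderings agree. Precisely: for two logit vectors z, w ∈ ℝ^K each with strictly decreasing entries, if z⁽¹⁾ − z⁽²⁾ > w⁽¹⁾ − w⁽²⁾ then there exists Λ > 0 such that for all λ > Λ, SR_max(λz) > SR_max(λw). That is, for large enough scale, the SR_max ordering of any two samples is determined by their confidence margins. -/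
/-- For large enough scale, the `SR_max` ordering of two strictly-decreasing
logit vectors is determined by their confidence margins. -/
theorem srmax_ordering_by_margin {K : ℕ} (z w : Fin (K + 2) → ℝ)
    (hz : StrictAnti z) (hw : StrictAnti w)
    (h : w 0 - w 1 < z 0 - z 1) :
    ∃ Λ : ℝ, 0 < Λ ∧ ∀ lam : ℝ, Λ < lam →
      Real.exp (lam * w 0) / (∑ j, Real.exp (lam * w j))
        < Real.exp (lam * z 0) / ∑ j, Real.exp (lam * z j) := by
  set d : ℝ := (z 0 - z 1) - (w 0 - w 1) with hd
  have hd0 : 0 < d := by simp only [hd]; linarith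
  refine ⟨max 1 (Real.log (K + 2) / d), lt_of_lt_of_le one_pos (le_max_left _ _), ?_⟩
  intro lam hlam
  have hlam1 : (1 : ℝ) < lam := lt_of_le_of_lt (le_max_left _ _) hlam
  have hlam0 : (0 : ℝ) < lam := by linarith
  have hlog : Real.log (K + 2) < lam * d := by
    have h2 : Real.log (K + 2) / d < lam := lt_of_le_of_lt (le_max_right _ _) hlam
    rw [div_lt_iff₀ hd0] at h2
    linarith [mul_comm lam d]
  have hSw : 0 < ∑ j, Real.exp (lam * w j) :=
    Finset.sum_pos (fun j _ => Real.exp_pos _) ⟨0, Finset.mem_univ 0⟩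
  have hSz : 0 < ∑ j, Real.exp (lam * z j) :=
    Finset.sum_pos (fun j _ => Real.exp_pos _) ⟨0, Finset.mem_univ 0⟩
  rw [div_lt_div_iff₀ hSw hSz]
  have e1 : Real.exp (lam * w 0) * ∑ j, Real.exp (lam * z j)
      = Real.exp (lam * w 0) * Real.exp (lam * z 0)
        + ∑ j : Fin (K + 1), Real.exp (lam * w 0) * Real.exp (lam * z j.succ) := by
    rw [Fin.sum_univ_succ, mul_add, Finset.mul_sum]
  have e2 : Real.exp (lam * z 0) * ∑ j, Real.exp (lam * w j)
      = Real.exp (lam * z 0) * Real.exp (lam * w 0)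
        + ∑ j : Fin (K + 1), Real.exp (lam * z 0) * Real.exp (lam * w j.succ) := by
    rw [Fin.sum_univ_succ, mul_add, Finset.mul_sum]
  rw [e1, e2]
  have hone : ∀ j : Fin (K + 1), (1 : Fin (K + 2)) ≤ j.succ := by
    intro j
    rw [Fin.le_def]
    simp [Fin.val_one]
  have htail : ∑ j : Fin (K + 1), Real.exp (lam * w 0) * Real.exp (lam * z j.succ)
      < ∑ j : Fin (K + 1), Real.exp (lam * z 0) * Real.exp (lam * w j.succ) := by
    have hbound : ∑ j : Fin (K + 1), Real.exp (lam * w 0) * Real.exp (lam * z j.succ)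
        ≤ (K + 1) * (Real.exp (lam * w 0) * Real.exp (lam * z 1)) := by
      have := Finset.sum_le_sum (f := fun j : Fin (K + 1) =>
          Real.exp (lam * w 0) * Real.exp (lam * z j.succ))
          (g := fun _ : Fin (K + 1) => Real.exp (lam * w 0) * Real.exp (lam * z 1))
          (s := Finset.univ) ?_
      · simpa [Finset.sum_const, Finset.card_univ, mul_comm] using this
      · intro j _
        have hz1 : z j.succ ≤ z 1 := hz.antitone (hone j)
        have : lam * z j.succ ≤ lam * z 1 := by nlinarith
        exact mul_le_mul_of_nonneg_left (Real.exp_le_exp.2 this) (Real.exp_pos _).le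
    have hkey : (K + 1 : ℝ) * (Real.exp (lam * w 0) * Real.exp (lam * z 1))
        < Real.exp (lam * z 0) * Real.exp (lam * w 1) := by
      rw [← Real.exp_add, ← Real.exp_add]
      have hK : (K + 1 : ℝ) < Real.exp (lam * d + (lam * w 0 + lam * z 1)
          - (lam * w 0 + lam * z 1)) := by
        have : (K + 2 : ℝ) = Real.exp (Real.log (K + 2)) := by
          rw [Real.exp_log]; positivity
        have hineq : Real.exp (Real.log (K + 2)) < Real.exp (lam * d) :=
          Real.exp_lt_exp.2 hlog
        simp only [add_sub_cancel_right]
        nlinarith [Real.exp_pos (lam * d)]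
      have heq : lam * z 0 + lam * w 1 = lam * d + (lam * w 0 + lam * z 1) := by
        rw [hd]; ring
      calc (K + 1 : ℝ) * Real.exp (lam * w 0 + lam * z 1)
          < Real.exp (lam * d) * Real.exp (lam * w 0 + lam * z 1) := by
            have : (K + 1 : ℝ) < Real.exp (lam * d) := by
              simpa using hK
            exact mul_lt_mul_of_pos_right this (Real.exp_pos _)
        _ = Real.exp (lam * z 0 + lam * w 1) := by
            rw [← Real.exp_add, heq]
    have hfirst : Real.exp (lam * z 0) * Real.exp (lam * w 1)
        ≤ ∑ j : Fin (K + 1), Real.exp (lam * z 0) * Real.exp (lam * w j.succ) := by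
      have h0 : ((0 : Fin (K + 1)).succ : Fin (K + 2)) = 1 := rfl
      calc Real.exp (lam * z 0) * Real.exp (lam * w 1)
          = Real.exp (lam * z 0) * Real.exp (lam * w ((0 : Fin (K+1)).succ)) := by rw [h0]
        _ ≤ _ := Finset.single_le_sum
            (f := fun j : Fin (K + 1) => Real.exp (lam * z 0) * Real.exp (lam * w j.succ))
            (fun j _ => by positivity) (Finset.mem_univ 0)
    linarith
  have hc : Real.exp (lam * w 0) * Real.exp (lam * z 0)
      = Real.exp (lam * z 0) * Real.exp (lam * w 0) := mul_comm _ _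
  linarith
end
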